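/- Let 𝕁_n = k[X_i^{(j)} : 1 ≤ i ≤ n, j ≥ 0] be the arc ring of a polynomial ring, graded by ℕⁿ with X_i^{(j)} in degree ε_i. For ā ∈ ℕⁿ, the graded dual of the component 𝕁_n[ā] is linearly isomorphic to the ring Λ_ā of polynomials in variables s_i^{(j)} (1 ≤ i ≤ n, 1 ≤ j ≤ a_i) invariant under 𝔖_{a₁} × ⋯ × 𝔖_{a_n} permuting the variables within each group, via ξ ↦ (ξ ⊗ 1)(X₁(s₁^{(1)})⋯X₁(s₁^{(a₁)})⋯X_n(s_n^{(1)})⋯X_n(s_n^{(a_n)})). -/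

import Mathlib

open MvPolynomial


theorem arc_exists_perm {m : ℕ} (u v : Fin m → ℕ)
    (h : Multiset.map u Finset.univ.val = Multiset.map v Finset.univ.val) :
    ∃ σ : Equiv.Perm (Fin m), v = u ∘ σ := by
  rw [Fin.univ_val_map, Fin.univ_val_map, Multiset.coe_eq_coe] at h
  have hperm : List.Perm (List.ofFn (u ∘ Tuple.sort u)) (List.ofFn (v ∘ Tuple.sort v)) :=
    ((Tuple.sort u).ofFn_comp_perm u).trans (h.trans ((Tuple.sort v).ofFn_comp_perm v).symm)
  have hsorted : u ∘ Tuple.sort u = v ∘ Tuple.sort v :=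
    List.ofFn_injective <| List.Perm.eq_of_sortedLE
      (Tuple.monotone_sort u).sortedLE_ofFn (Tuple.monotone_sort v).sortedLE_ofFn hperm
  refine ⟨(Tuple.sort v).symm.trans (Tuple.sort u), ?_⟩
  funext l
  have := congrFun hsorted ((Tuple.sort v).symm l)
  simpa using this.symm

section Arc

variable {n : ℕ} {a : Fin n → ℕ}

/-- group multisets of an exponent vector -/
def arcGM (c : ((i : Fin n) × Fin (a i)) →₀ ℕ) :
    (i : Fin n) → {b : Multiset ℕ // Multiset.card b = a i} :=
  fun i => ⟨Multiset.map (fun l : Fin (a i) => c ⟨i, l⟩) Finset.univ.val, by simp⟩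

theorem arc_ofFn_get_cast {L : List ℕ} {m : ℕ} (h : L.length = m) :
    List.ofFn (fun l : Fin m => L.get ⟨l.1, lt_of_lt_of_le l.2 (le_of_eq h.symm)⟩) = L := by
  subst h; exact List.ofFn_get L

/-- canonical exponent vector of a tuple of multisets -/
noncomputable def arcCanC (bb : (i : Fin n) → {b : Multiset ℕ // Multiset.card b = a i}) :
    ((i : Fin n) × Fin (a i)) →₀ ℕ :=
  Finsupp.equivFunOnFinite.symm fun p =>
    (bb p.1).1.toList.get ⟨p.2.1, by
      rw [Multiset.length_toList, (bb p.1).2]; exact p.2.2⟩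

theorem arcGM_canC (bb : (i : Fin n) → {b : Multiset ℕ // Multiset.card b = a i}) :
    arcGM (arcCanC bb) = bb := by
  funext i
  apply Subtype.ext
  show Multiset.map (fun l : Fin (a i) => arcCanC bb ⟨i, l⟩) Finset.univ.val = (bb i).1
  have hlen : (bb i).1.toList.length = a i := by
    rw [Multiset.length_toList, (bb i).2]
  calc Multiset.map (fun l : Fin (a i) => arcCanC bb ⟨i, l⟩) Finset.univ.val
      = ↑(List.ofFn (fun l : Fin (a i) => arcCanC bb ⟨i, l⟩)) := Fin.univ_val_map _
    _ = ↑(List.ofFn (fun l : Fin (a i) => (bb i).1.toList.get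
          ⟨l.1, lt_of_lt_of_le l.2 (le_of_eq hlen.symm)⟩)) := by rfl
    _ = ↑((bb i).1.toList) := by rw [arc_ofFn_get_cast hlen]
    _ = (bb i).1 := (bb i).1.coe_toList

theorem arc_sum_gm (c : ((i : Fin n) × Fin (a i)) →₀ ℕ) :
    ∑ i : Fin n, ((arcGM c i : Multiset ℕ)).sum = ∑ p : (i : Fin n) × Fin (a i), c p := by
  rw [← Finset.univ_sigma_univ, Finset.sum_sigma]
  apply Finset.sum_congr rfl
  intro i _
  show (Multiset.map (fun l : Fin (a i) => c ⟨i, l⟩) Finset.univ.val).sum = _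
  rw [Finset.sum_eq_multiset_sum]

theorem arcGM_mapDomain (σ : (i : Fin n) → Equiv.Perm (Fin (a i)))
    (c : ((i : Fin n) × Fin (a i)) →₀ ℕ) :
    arcGM (Finsupp.mapDomain (Equiv.sigmaCongrRight σ).symm c) = arcGM c := by
  funext i
  apply Subtype.ext
  show Multiset.map (fun l : Fin (a i) =>
      (Finsupp.mapDomain (⇑(Equiv.sigmaCongrRight σ).symm) c) ⟨i, l⟩) Finset.univ.val
    = Multiset.map (fun l : Fin (a i) => c ⟨i, l⟩) Finset.univ.val
  have h1 : ∀ l : Fin (a i),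
      (Finsupp.mapDomain (⇑(Equiv.sigmaCongrRight σ).symm) c) ⟨i, l⟩ = c ⟨i, σ i l⟩ := by
    intro l
    rw [Finsupp.mapDomain_equiv_apply]
    rfl
  simp only [h1]
  rw [Fin.univ_val_map, Fin.univ_val_map, Multiset.coe_eq_coe]
  exact (σ i).ofFn_comp_perm (fun l => c ⟨i, l⟩)

theorem arc_coeff_eq_of_gm_eq {𝕜 : Type*} [Field 𝕜] {f : MvPolynomial ((i : Fin n) × Fin (a i)) 𝕜}
    (hf : ∀ σ : (i : Fin n) → Equiv.Perm (Fin (a i)),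
      rename (fun p : (i : Fin n) × Fin (a i) => ⟨p.1, σ p.1 p.2⟩) f = f)
    {c c' : ((i : Fin n) × Fin (a i)) →₀ ℕ} (h : arcGM c = arcGM c') :
    MvPolynomial.coeff c f = MvPolynomial.coeff c' f := by
  have hex : ∀ i : Fin n, ∃ σ : Equiv.Perm (Fin (a i)),
      (fun l => c' ⟨i, l⟩) = (fun l => c ⟨i, l⟩) ∘ σ := by
    intro i
    apply arc_exists_perm
    exact congrArg Subtype.val (congrFun h i)
  choose σ hσ using hex
  have hc' : c' = Finsupp.mapDomain (⇑(Equiv.sigmaCongrRight σ).symm) c := by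
    ext p
    rw [Finsupp.mapDomain_equiv_apply]
    have := congrFun (hσ p.1) p.2
    simpa using this
  have hg : (fun p : (i : Fin n) × Fin (a i) => (⟨p.1, ((σ p.1)⁻¹ : Equiv.Perm _) p.2⟩ : (i : Fin n) × Fin (a i)))
      = ⇑(Equiv.sigmaCongrRight σ).symm := by
    rfl
  have hrename : rename (⇑(Equiv.sigmaCongrRight σ).symm) f = f := by
    rw [← hg]; exact hf (fun i => (σ i)⁻¹)
  calc MvPolynomial.coeff c f
      = MvPolynomial.coeff (Finsupp.mapDomain (⇑(Equiv.sigmaCongrRight σ).symm) c)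
          (rename (⇑(Equiv.sigmaCongrRight σ).symm) f) :=
        (coeff_rename_mapDomain _ (Equiv.sigmaCongrRight σ).symm.injective f c).symm
    _ = MvPolynomial.coeff c' f := by rw [hrename, ← hc']

end Arc


/-- The degree-`ā` component `𝕁_n[ā]` of the arc ring of a polynomial ring has
monomial basis indexed by tuples of multisets `(bᵢ)ᵢ` with `|bᵢ| = aᵢ` (the multiset
`bᵢ` records the upper indices of the chosen arc variables `X_i^{(j)}` in group `i`).
Its graded dual (functionals supported in finitely many `grad`-degrees, where
`grad = Σᵢ Σ_{j∈bᵢ} j`) is linearly isomorphic to the ring `Λ_ā` of polynomials in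
variables `s_i^{(j)}` (`1 ≤ j ≤ aᵢ`) symmetric within each group, via
`ξ ↦ (ξ ⊗ 1)(∏_{i,j} X_i(s_i^{(j)}))`; concretely, the coefficient of the symmetric
polynomial at an exponent vector `c` equals the value of `ξ` at the monomial whose
`i`-th multiset of upper indices is the multiset of exponents `{c(i,l)}_l`. -/
theorem arc_component_dual_is_partially_symmetric
    (𝕜 : Type*) [Field 𝕜] (n : ℕ) (a : Fin n → ℕ) :
    ∃ e : {ξ : ((i : Fin n) → {b : Multiset ℕ // Multiset.card b = a i}) → 𝕜 //
            ∃ N : ℕ, ∀ bb : (i : Fin n) → {b : Multiset ℕ // Multiset.card b = a i},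
              N ≤ (∑ i : Fin n, ((bb i : Multiset ℕ)).sum) → ξ bb = 0} ≃
          {f : MvPolynomial ((i : Fin n) × Fin (a i)) 𝕜 //
            ∀ σ : (i : Fin n) → Equiv.Perm (Fin (a i)),
              rename (fun p : (i : Fin n) × Fin (a i) => ⟨p.1, σ p.1 p.2⟩) f = f},
      ∀ ξ (c : ((i : Fin n) × Fin (a i)) →₀ ℕ),
        MvPolynomial.coeff c (e ξ : MvPolynomial ((i : Fin n) × Fin (a i)) 𝕜) =
          ξ.1 (fun i =>
            ⟨Multiset.map (fun l : Fin (a i) => c ⟨i, l⟩) Finset.univ.val, by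
              simp⟩) := by
  set XiT := {ξ : ((i : Fin n) → {b : Multiset ℕ // Multiset.card b = a i}) → 𝕜 //
            ∃ N : ℕ, ∀ bb : (i : Fin n) → {b : Multiset ℕ // Multiset.card b = a i},
              N ≤ (∑ i : Fin n, ((bb i : Multiset ℕ)).sum) → ξ bb = 0} with hXiT
  set SymT := {f : MvPolynomial ((i : Fin n) × Fin (a i)) 𝕜 //
            ∀ σ : (i : Fin n) → Equiv.Perm (Fin (a i)),
              rename (fun p : (i : Fin n) × Fin (a i) => ⟨p.1, σ p.1 p.2⟩) f = f} with hSymT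
  -- the easy direction
  have Φdef : ∀ f : SymT, ∃ N : ℕ, ∀ bb,
      N ≤ (∑ i : Fin n, ((bb i : Multiset ℕ)).sum) →
        MvPolynomial.coeff (arcCanC bb) f.1 = 0 := by
    intro f
    refine ⟨f.1.totalDegree + 1, fun bb hbb => ?_⟩
    apply coeff_eq_zero_of_totalDegree_lt
    have hsupp : ∑ p ∈ (arcCanC bb).support, (arcCanC bb) p
        = ∑ p : (i : Fin n) × Fin (a i), (arcCanC bb) p := by
      apply Finset.sum_subset (Finset.subset_univ _)
      intro x _ hx
      simpa using hx
    rw [hsupp, ← arc_sum_gm, arcGM_canC]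
    omega
  let Φ : SymT → XiT := fun f => ⟨fun bb => MvPolynomial.coeff (arcCanC bb) f.1, Φdef f⟩
  have hinj : Function.Injective Φ := by
    intro f g hfg
    apply Subtype.ext
    apply MvPolynomial.ext
    intro c
    have h1 : MvPolynomial.coeff c f.1 = MvPolynomial.coeff (arcCanC (arcGM c)) f.1 :=
      arc_coeff_eq_of_gm_eq f.2 (arcGM_canC (arcGM c)).symm
    have h2 : MvPolynomial.coeff c g.1 = MvPolynomial.coeff (arcCanC (arcGM c)) g.1 :=
      arc_coeff_eq_of_gm_eq g.2 (arcGM_canC (arcGM c)).symm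
    rw [h1, h2]
    exact congrFun (congrArg Subtype.val hfg) (arcGM c)
  have hsurj : Function.Surjective Φ := by
    rintro ⟨ξ0, N, hN⟩
    set S : Finset (((i : Fin n) × Fin (a i)) →₀ ℕ) :=
      (Fintype.piFinset fun _ : (i : Fin n) × Fin (a i) => Finset.range N).map
        (Finsupp.equivFunOnFinite.symm.toEmbedding) with hS
    set f0 : MvPolynomial ((i : Fin n) × Fin (a i)) 𝕜 :=
      ∑ x ∈ S, monomial x (ξ0 (arcGM x)) with hf0
    have hcoeff : ∀ d, MvPolynomial.coeff d f0 = ξ0 (arcGM d) := by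
      intro d
      rw [hf0, MvPolynomial.coeff_sum]
      simp only [coeff_monomial]
      rw [Finset.sum_ite_eq' S d (fun x => ξ0 (arcGM x))]
      by_cases hd : d ∈ S
      · simp [hd]
      · simp only [hd, if_false]
        have : ∃ p, N ≤ d p := by
          by_contra hcon
          push_neg at hcon
          apply hd
          rw [hS, Finset.mem_map]
          refine ⟨Finsupp.equivFunOnFinite d, ?_, Finsupp.equivFunOnFinite.symm_apply_apply d⟩
          rw [Fintype.mem_piFinset]
          intro p
          rw [Finset.mem_range]
          exact hcon p
        obtain ⟨p, hp⟩ := this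
        refine (hN (arcGM d) ?_).symm
        rw [arc_sum_gm]
        calc N ≤ d p := hp
          _ ≤ ∑ q : (i : Fin n) × Fin (a i), d q := Finset.single_le_sum (fun q _ => Nat.zero_le _) (Finset.mem_univ p)
    have hsym : ∀ σ : (i : Fin n) → Equiv.Perm (Fin (a i)),
        rename (fun p : (i : Fin n) × Fin (a i) => ⟨p.1, σ p.1 p.2⟩) f0 = f0 := by
      intro σ
      apply MvPolynomial.ext
      intro d
      have hg : (fun p : (i : Fin n) × Fin (a i) => (⟨p.1, σ p.1 p.2⟩ : (i : Fin n) × Fin (a i)))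
          = ⇑(Equiv.sigmaCongrRight σ) := rfl
      set d' := Finsupp.mapDomain (⇑(Equiv.sigmaCongrRight σ).symm) d with hd'
      have hdd : Finsupp.mapDomain (⇑(Equiv.sigmaCongrRight σ)) d' = d := by
        rw [hd', ← Finsupp.mapDomain_comp]
        rw [show (⇑(Equiv.sigmaCongrRight σ)) ∘ (⇑(Equiv.sigmaCongrRight σ).symm) = id from
          funext fun x => (Equiv.sigmaCongrRight σ).apply_symm_apply x]
        exact Finsupp.mapDomain_id
      rw [hg]
      calc MvPolynomial.coeff d (rename (⇑(Equiv.sigmaCongrRight σ)) f0)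
          = MvPolynomial.coeff (Finsupp.mapDomain (⇑(Equiv.sigmaCongrRight σ)) d')
              (rename (⇑(Equiv.sigmaCongrRight σ)) f0) := by rw [hdd]
        _ = MvPolynomial.coeff d' f0 :=
            coeff_rename_mapDomain _ (Equiv.sigmaCongrRight σ).injective f0 d'
        _ = ξ0 (arcGM d') := hcoeff d'
        _ = ξ0 (arcGM d) := by rw [hd', arcGM_mapDomain]
        _ = MvPolynomial.coeff d f0 := (hcoeff d).symm
    refine ⟨⟨f0, hsym⟩, ?_⟩
    apply Subtype.ext
    funext bb
    show MvPolynomial.coeff (arcCanC bb) f0 = ξ0 bb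
    rw [hcoeff, arcGM_canC]
  refine ⟨(Equiv.ofBijective Φ ⟨hinj, hsurj⟩).symm, ?_⟩
  intro ξ c
  set e := (Equiv.ofBijective Φ ⟨hinj, hsurj⟩).symm with he
  have hΦ : Φ (e ξ) = ξ := (Equiv.ofBijective Φ ⟨hinj, hsurj⟩).apply_symm_apply ξ
  have h1 : MvPolynomial.coeff c ((e ξ) : MvPolynomial ((i : Fin n) × Fin (a i)) 𝕜)
      = MvPolynomial.coeff (arcCanC (arcGM c)) ((e ξ) : MvPolynomial _ 𝕜) :=
    arc_coeff_eq_of_gm_eq (e ξ).2 (arcGM_canC (arcGM c)).symm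
  have h2 : MvPolynomial.coeff (arcCanC (arcGM c)) ((e ξ) : MvPolynomial _ 𝕜) = ξ.1 (arcGM c) :=
    congrFun (congrArg Subtype.val hΦ) (arcGM c)
  rw [h1, h2]
  rfl
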